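/- Consider a commutative 3×3 diagram of chain complexes whose rows and columns are short exact sequences: rows 0→X→Y→Z→0, 0→X'→Y'→Z'→0, 0→X''→Y''→Z''→0, and columns 0→X→X'→X''→0 etc. Then in the induced grid of long exact homology sequences, all squares commute except that the square formed by the connecting homomorphisms ∂'' : H_n(Z'') → H_{n−1}(X'') (of the bottom row), ∂_X : H_{n−1}(X'') → H_{n−2}(X) (of the left column), ∂_Z : H_n(Z'') → H_{n−1}(Z) (of the right column), and ∂ : H_{n−1}(Z) → H_{n−2}(X) (of the top row) anticommutes: ∂_X ∘ ∂'' + ∂ ∘ ∂_Z = 0. -/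

import Mathlib

open CategoryTheory

open HomologicalComplex

section Aux
variable {R : Type} [CommRing R]

lemma aux_shortExact_eval {c : ComplexShape ℤ}
    {S : ShortComplex (HomologicalComplex (ModuleCat R) c)} (hS : S.ShortExact) (i : ℤ) :
    (S.map (HomologicalComplex.eval (ModuleCat R) c i)).ShortExact := by
  have := hS.mono_f
  have := hS.epi_g
  exact hS.map _

lemma aux_delta_apply
    {S : ShortComplex (HomologicalComplex (ModuleCat R) (ComplexShape.down ℤ))}
    (hS : S.ShortExact) (i j k : ℤ) (hij : j + 1 = i) (hjk : k + 1 = j)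
    (x₃ : S.X₃.X i) (hx₃ : S.X₃.d i j x₃ = 0)
    (x₂ : S.X₂.X i) (hx₂ : S.g.f i x₂ = x₃)
    (x₁ : S.X₁.X j) (hx₁ : S.f.f j x₁ = S.X₂.d i j x₂)
    (hx₁' : S.X₁.d j k x₁ = 0) :
    hS.δ i j (by simpa using hij)
        (S.X₃.homologyπ i (S.X₃.cyclesMk x₃ j
          ((ComplexShape.down ℤ).next_eq' (by simpa using hij)) hx₃)) =
      S.X₁.homologyπ j (S.X₁.cyclesMk x₁ k
          ((ComplexShape.down ℤ).next_eq' (by simpa using hjk)) hx₁') :=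
  hS.δ_apply i j (by simpa using hij) x₃ hx₃ x₂ hx₂ x₁ hx₁ k
    ((ComplexShape.down ℤ).next_eq' (by simpa using hjk))

lemma aux_dcomm {c : ComplexShape ℤ} {A B : HomologicalComplex (ModuleCat R) c}
    (φ : A ⟶ B) (i j : ℤ) (x : A.X i) :
    B.d i j (φ.f i x) = φ.f j (A.d i j x) := by
  have := ConcreteCategory.congr_hom (φ.comm i j) x
  rw [ConcreteCategory.comp_apply, ConcreteCategory.comp_apply] at this
  exact this

lemma aux_sq {c : ComplexShape ℤ} {A B C D : HomologicalComplex (ModuleCat R) c}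
    {α : A ⟶ B} {β : B ⟶ D} {γ : A ⟶ C} {δ : C ⟶ D} (e : α ≫ β = γ ≫ δ) (i : ℤ) (x : A.X i) :
    β.f i (α.f i x) = δ.f i (γ.f i x) := by
  simpa using ConcreteCategory.congr_hom (congrArg (fun ψ => HomologicalComplex.Hom.f ψ i) e) x

lemma aux_zero {c : ComplexShape ℤ} {A B C : HomologicalComplex (ModuleCat R) c}
    {α : A ⟶ B} {β : B ⟶ C} (e : α ≫ β = 0) (i : ℤ) (x : A.X i) :
    β.f i (α.f i x) = 0 := by
  simpa using ConcreteCategory.congr_hom (congrArg (fun ψ => HomologicalComplex.Hom.f ψ i) e) x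

lemma aux_comp_zero {M N P : ModuleCat R} (α : M ⟶ N) (β : N ⟶ P) (e : α ≫ β = 0) (x : M) :
    β (α x) = 0 := by
  simpa using ConcreteCategory.congr_hom e x

lemma aux_dd {c : ComplexShape ℤ} {A : HomologicalComplex (ModuleCat R) c}
    (i j k : ℤ) (x : A.X i) : A.d j k (A.d i j x) = 0 :=
  aux_comp_zero _ _ (A.d_comp_d i j k) x

end Aux

/-- In a `3×3` commutative diagram of chain complexes of modules with short
exact rows `0→X→Y→Z→0`, `0→X'→Y'→Z'→0`, `0→X''→Y''→Z''→0` and short exact columns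
`0→X→X'→X''→0`, `0→Y→Y'→Y''→0`, `0→Z→Z'→Z''→0`, the square of connecting homomorphisms
anticommutes: `∂_X ∘ ∂'' + ∂ ∘ ∂_Z = 0` as maps `H_n(Z'') → H_{n-2}(X)`.
(All other squares of the induced grid commute by functoriality of the long exact sequence.) -/
theorem three_by_three_connecting_anticommutes
    (R : Type) [CommRing R]
    (X X' X'' Y Y' Y'' Z Z' Z'' : HomologicalComplex (ModuleCat R) (ComplexShape.down ℤ))
    (u : X ⟶ Y) (v : Y ⟶ Z) (u' : X' ⟶ Y') (v' : Y' ⟶ Z')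
    (u'' : X'' ⟶ Y'') (v'' : Y'' ⟶ Z'')
    (f : X ⟶ X') (f' : X' ⟶ X'') (g : Y ⟶ Y') (g' : Y' ⟶ Y'')
    (h : Z ⟶ Z') (h' : Z' ⟶ Z'')
    (huv : u ≫ v = 0) (huv' : u' ≫ v' = 0) (huv'' : u'' ≫ v'' = 0)
    (hff' : f ≫ f' = 0) (hgg' : g ≫ g' = 0) (hhh' : h ≫ h' = 0)
    (comm₁ : u ≫ g = f ≫ u') (comm₂ : v ≫ h = g ≫ v')
    (comm₃ : u' ≫ g' = f' ≫ u'') (comm₄ : v' ≫ h' = g' ≫ v'')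
    (hrow₁ : (ShortComplex.mk u v huv).ShortExact)
    (hrow₂ : (ShortComplex.mk u' v' huv').ShortExact)
    (hrow₃ : (ShortComplex.mk u'' v'' huv'').ShortExact)
    (hcolX : (ShortComplex.mk f f' hff').ShortExact)
    (hcolY : (ShortComplex.mk g g' hgg').ShortExact)
    (hcolZ : (ShortComplex.mk h h' hhh').ShortExact)
    (n : ℤ) :
    hrow₃.δ n (n - 1) (by simp only [ComplexShape.down_Rel]; omega) ≫ hcolX.δ (n - 1) (n - 2) (by simp only [ComplexShape.down_Rel]; omega)
      + hcolZ.δ n (n - 1) (by simp only [ComplexShape.down_Rel]; omega) ≫ hrow₁.δ (n - 1) (n - 2) (by simp only [ComplexShape.down_Rel]; omega) = 0 := by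
  have surj_h' : Function.Surjective (h'.f n) :=
    (aux_shortExact_eval hcolZ n).moduleCat_surjective_g
  have surj_v' : Function.Surjective (v'.f n) :=
    (aux_shortExact_eval hrow₂ n).moduleCat_surjective_g
  have surj_f' : Function.Surjective (f'.f (n - 1)) :=
    (aux_shortExact_eval hcolX (n - 1)).moduleCat_surjective_g
  have ex_row₃ : ∀ (t : Y''.X (n - 1)), v''.f (n - 1) t = 0 →
      ∃ s : X''.X (n - 1), u''.f (n - 1) s = t :=
    fun t ht => (ShortComplex.moduleCat_exact_iff _).1
      (aux_shortExact_eval hrow₃ (n - 1)).exact t ht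
  have ex_colY : ∀ (t : Y'.X (n - 1)), g'.f (n - 1) t = 0 →
      ∃ s : Y.X (n - 1), g.f (n - 1) s = t :=
    fun t ht => (ShortComplex.moduleCat_exact_iff _).1
      (aux_shortExact_eval hcolY (n - 1)).exact t ht
  have ex_colX : ∀ (t : X'.X (n - 2)), f'.f (n - 2) t = 0 →
      ∃ s : X.X (n - 2), f.f (n - 2) s = t :=
    fun t ht => (ShortComplex.moduleCat_exact_iff _).1
      (aux_shortExact_eval hcolX (n - 2)).exact t ht
  have inj_u'' : Function.Injective (u''.f (n - 2)) :=
    (aux_shortExact_eval hrow₃ (n - 2)).moduleCat_injective_f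
  have inj_g : Function.Injective (g.f (n - 2)) :=
    (aux_shortExact_eval hcolY (n - 2)).moduleCat_injective_f
  have inj_u : Function.Injective (u.f (n - 3)) :=
    (aux_shortExact_eval hrow₁ (n - 3)).moduleCat_injective_f
  apply ModuleCat.hom_ext
  apply LinearMap.ext
  intro x
  obtain ⟨cz, rfl⟩ := (ModuleCat.epi_iff_surjective (Z''.homologyπ n)).1 inferInstance x
  set z'' : Z''.X n := Z''.iCycles n cz with hz''def
  have hz'' : Z''.d n (n - 1) z'' = 0 := aux_comp_zero _ _ (Z''.iCycles_d n (n - 1)) cz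
  have hcz : cz = Z''.cyclesMk z'' (n - 1)
      ((ComplexShape.down ℤ).next_eq' (by simp)) hz'' := by
    apply (ModuleCat.mono_iff_injective (Z''.iCycles n)).1 inferInstance
    exact (Z''.i_cyclesMk z'' (n - 1) _ hz'').symm
  obtain ⟨z', hz'⟩ := surj_h' z''
  obtain ⟨y', hy'⟩ := surj_v' z'
  have hv''gdy' : v''.f (n - 1) (g'.f (n - 1) (Y'.d n (n - 1) y')) = 0 := by
    rw [← aux_sq comm₄ (n - 1), ← aux_dcomm v' n (n - 1) y', hy',
      ← aux_dcomm h' n (n - 1) z', hz', hz'']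
  obtain ⟨x'', hx''⟩ := ex_row₃ _ hv''gdy'
  have hdx'' : X''.d (n - 1) (n - 2) x'' = 0 := by
    apply inj_u''
    rw [map_zero, ← aux_dcomm u'' (n - 1) (n - 2) x'', hx'',
      aux_dcomm g' (n - 1) (n - 2) _, aux_dd, map_zero]
  obtain ⟨x', hx'⟩ := surj_f' x''
  have hker : g'.f (n - 1) (Y'.d n (n - 1) y' - u'.f (n - 1) x') = 0 := by
    rw [map_sub, aux_sq comm₃ (n - 1), hx', hx'', sub_self]
  obtain ⟨y, hy⟩ := ex_colY _ hker
  have hf'dx' : f'.f (n - 2) (X'.d (n - 1) (n - 2) x') = 0 := by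
    rw [← aux_dcomm f' (n - 1) (n - 2) x', hx', hdx'']
  obtain ⟨x₁, hx₁⟩ := ex_colX _ hf'dx'
  have hdy : u.f (n - 2) (-x₁) = Y.d (n - 1) (n - 2) y := by
    apply inj_g
    rw [aux_sq comm₁ (n - 2), ← aux_dcomm g (n - 1) (n - 2) y, hy, map_sub, map_neg,
      hx₁, map_neg, ← aux_dcomm u' (n - 1) (n - 2) x', aux_dd]
    simp
  have hdx₁ : X.d (n - 2) (n - 3) x₁ = 0 := by
    have : X.d (n - 2) (n - 3) (-x₁) = 0 := by
      apply inj_u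
      rw [map_zero, ← aux_dcomm u (n - 2) (n - 3) (-x₁), hdy, aux_dd]
    simpa using this
  have hdnx₁ : X.d (n - 2) (n - 3) (-x₁) = 0 := by rw [map_neg, hdx₁, neg_zero]
  -- the element v y is the ∂_Z image witness
  have hvgy'' : v''.f n (g'.f n y') = z'' := by rw [← aux_sq comm₄ n, hy', hz']
  have hu''x'' : u''.f (n - 1) x'' = Y''.d n (n - 1) (g'.f n y') := by
    rw [hx'', aux_dcomm g' n (n - 1) y']
  have hhvy : h.f (n - 1) (v.f (n - 1) y) = Z'.d n (n - 1) z' := by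
    rw [aux_sq comm₂ (n - 1), hy, map_sub, aux_zero huv' (n - 1) x', sub_zero,
      ← hy', ← aux_dcomm v' n (n - 1) y']
  have hdvy : Z.d (n - 1) (n - 2) (v.f (n - 1) y) = 0 := by
    rw [aux_dcomm v (n - 1) (n - 2) y, ← hdy, aux_zero huv (n - 2) (-x₁)]
  -- now compute both double connecting maps
  have e1 : hrow₃.δ n (n - 1) (by simp only [ComplexShape.down_Rel]; omega)
      (Z''.homologyπ n (Z''.cyclesMk z'' (n - 1)
        ((ComplexShape.down ℤ).next_eq' (by simp only [ComplexShape.down_Rel]; omega)) hz'')) =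
      X''.homologyπ (n - 1) (X''.cyclesMk x'' (n - 2)
        ((ComplexShape.down ℤ).next_eq' (by simp only [ComplexShape.down_Rel]; omega)) hdx'') :=
    aux_delta_apply hrow₃ n (n - 1) (n - 2) (by ring) (by ring)
      z'' hz'' (g'.f n y') hvgy'' x'' hu''x'' hdx''
  have e2 : hcolX.δ (n - 1) (n - 2) (by simp only [ComplexShape.down_Rel]; omega)
      (X''.homologyπ (n - 1) (X''.cyclesMk x'' (n - 2)
        ((ComplexShape.down ℤ).next_eq' (by simp only [ComplexShape.down_Rel]; omega)) hdx'')) =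
      X.homologyπ (n - 2) (X.cyclesMk x₁ (n - 3)
        ((ComplexShape.down ℤ).next_eq' (by simp only [ComplexShape.down_Rel]; omega)) hdx₁) :=
    aux_delta_apply hcolX (n - 1) (n - 2) (n - 3) (by ring) (by ring)
      x'' hdx'' x' hx' x₁ (by rw [hx₁]) hdx₁
  have e3 : hcolZ.δ n (n - 1) (by simp only [ComplexShape.down_Rel]; omega)
      (Z''.homologyπ n (Z''.cyclesMk z'' (n - 1)
        ((ComplexShape.down ℤ).next_eq' (by simp only [ComplexShape.down_Rel]; omega)) hz'')) =
      Z.homologyπ (n - 1) (Z.cyclesMk (v.f (n - 1) y) (n - 2)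
        ((ComplexShape.down ℤ).next_eq' (by simp only [ComplexShape.down_Rel]; omega)) hdvy) :=
    aux_delta_apply hcolZ n (n - 1) (n - 2) (by ring) (by ring)
      z'' hz'' z' hz' (v.f (n - 1) y) hhvy hdvy
  have e4 : hrow₁.δ (n - 1) (n - 2) (by simp only [ComplexShape.down_Rel]; omega)
      (Z.homologyπ (n - 1) (Z.cyclesMk (v.f (n - 1) y) (n - 2)
        ((ComplexShape.down ℤ).next_eq' (by simp only [ComplexShape.down_Rel]; omega)) hdvy)) =
      X.homologyπ (n - 2) (X.cyclesMk (-x₁) (n - 3)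
        ((ComplexShape.down ℤ).next_eq' (by simp only [ComplexShape.down_Rel]; omega)) hdnx₁) :=
    aux_delta_apply hrow₁ (n - 1) (n - 2) (n - 3) (by ring) (by ring)
      (v.f (n - 1) y) hdvy y rfl (-x₁) hdy hdnx₁
  rw [hcz]
  have step : ∀ (a b : (Z''.homology n) ⟶ (X.homology (n - 2))) (t : Z''.homology n),
      (a + b) t = a t + b t := fun a b t => rfl
  have step2 : ∀ {M N P : ModuleCat R} (a : M ⟶ N) (b : N ⟶ P) (t : M),
      (a ≫ b) t = b (a t) := fun a b t => rfl
  rw [ModuleCat.hom_zero, LinearMap.zero_apply]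
  change ConcreteCategory.hom (_ : Z''.homology n ⟶ X.homology (n - 2)) _ = 0
  rw [step, step2, step2, e1, e2, e3, e4, ← map_add]
  have hsum : X.cyclesMk x₁ (n - 3)
        ((ComplexShape.down ℤ).next_eq' (by simp only [ComplexShape.down_Rel]; omega)) hdx₁
      + X.cyclesMk (-x₁) (n - 3)
        ((ComplexShape.down ℤ).next_eq' (by simp only [ComplexShape.down_Rel]; omega)) hdnx₁ = 0 := by
    apply (ModuleCat.mono_iff_injective (X.iCycles (n - 2))).1 inferInstance
    have i1 : X.iCycles (n - 2) (X.cyclesMk x₁ (n - 3)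
        ((ComplexShape.down ℤ).next_eq' (by simp only [ComplexShape.down_Rel]; omega)) hdx₁)
        = x₁ := X.i_cyclesMk _ _ _ _
    have i2 : X.iCycles (n - 2) (X.cyclesMk (-x₁) (n - 3)
        ((ComplexShape.down ℤ).next_eq' (by simp only [ComplexShape.down_Rel]; omega)) hdnx₁)
        = -x₁ := X.i_cyclesMk _ _ _ _
    rw [map_add, map_zero, i1, i2, add_neg_cancel]
  rw [hsum, map_zero]
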